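/- Let X1, X2 be iid St. Petersburg lotteries. Then for every positive integer m, P((X1 + X2)/2 < 2^m) = P(X1 < 2^m) = 1 − 2^{1−m}. -/

import Mathlib

open MeasureTheory ProbabilityTheory Real Finset
open scoped ENNReal

noncomputable section

variable {Ω : Type*} [MeasurableSpace Ω]

/-- `X ~ Pareto(α)` : cdf `1 - x^(-α)` for `x ≥ 1`. -/
def IsPareto (P : Measure Ω) (α : ℝ) (X : Ω → ℝ) : Prop :=
  Measurable X ∧ (∀ x : ℝ, 1 ≤ x → P {ω | x < X ω} = ENNReal.ofReal (x ^ (-α))) ∧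
    P {ω | X ω < 1} = 0

/-- the increasing rearrangement of a vector -/
def sortedVec {n : ℕ} (f : Fin n → ℝ) : Fin n → ℝ := f ∘ Tuple.sort f

/-- `MajorizedBy θ η` : `θ ⪯ η`, i.e. equal sums and the sum of the `k` smallest
components of `θ` is at least that of `η` for each `k`. -/
def MajorizedBy {n : ℕ} (θ η : Fin n → ℝ) : Prop :=
  (∑ i, θ i = ∑ i, η i) ∧
  ∀ k : ℕ, k ≤ n →
    ∑ i ∈ Finset.univ.filter (fun i : Fin n => (i : ℕ) < k), sortedVec η i ≤
    ∑ i ∈ Finset.univ.filter (fun i : Fin n => (i : ℕ) < k), sortedVec θ i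

/-- St. Petersburg lottery: takes value `2^k` with probability `2^(-k)` for `k ≥ 1`. -/
def IsStPetersburg (P : Measure Ω) (X : Ω → ℝ) : Prop :=
  Measurable X ∧ ∀ k : ℕ, 1 ≤ k → P {ω | X ω = 2 ^ k} = ((2 : ENNReal) ^ k)⁻¹

/-! ### Auxiliary lemmas -/

lemma keyNat (a b m : ℕ) (hm : 1 ≤ m) :
    2 ^ a + 2 ^ b < 2 ^ (m + 1) ↔
      (a < m ∧ b < m) ∨ (a = m ∧ b < m) ∨ (a < m ∧ b = m) := by
  obtain ⟨n, rfl⟩ : ∃ n, m = n + 1 := ⟨m - 1, by omega⟩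
  have e2 : (2:ℕ) ^ (n + 1 + 1) = 4 * 2 ^ n := by ring
  have e1 : (2:ℕ) ^ (n + 1) = 2 * 2 ^ n := by ring
  have hp : 0 < (2:ℕ) ^ n := Nat.pow_pos (by norm_num)
  have hpa : 0 < (2:ℕ) ^ a := Nat.pow_pos (by norm_num)
  have hpb : 0 < (2:ℕ) ^ b := Nat.pow_pos (by norm_num)
  constructor
  · intro h
    have ha : a ≤ n + 1 := by
      by_contra hc
      have := Nat.pow_le_pow_right (by norm_num : 1 ≤ 2) (show n + 1 + 1 ≤ a by omega)
      omega
    have hb : b ≤ n + 1 := by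
      by_contra hc
      have := Nat.pow_le_pow_right (by norm_num : 1 ≤ 2) (show n + 1 + 1 ≤ b by omega)
      omega
    have hab : ¬(a = n + 1 ∧ b = n + 1) := by
      rintro ⟨rfl, hb'⟩
      subst hb'
      omega
    omega
  · intro h
    have h2a : 2 ^ a ≤ 2 ^ (n + 1) := Nat.pow_le_pow_right (by norm_num) (by omega)
    have h2b : 2 ^ b ≤ 2 ^ (n + 1) := Nat.pow_le_pow_right (by norm_num) (by omega)
    rcases h with ⟨ha', hb'⟩ | ⟨ha', hb'⟩ | ⟨ha', hb'⟩
    · have : 2 ^ b ≤ 2 ^ n := Nat.pow_le_pow_right (by norm_num) (by omega)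
      omega
    · have : 2 ^ b ≤ 2 ^ n := Nat.pow_le_pow_right (by norm_num) (by omega)
      omega
    · have : 2 ^ a ≤ 2 ^ n := Nat.pow_le_pow_right (by norm_num) (by omega)
      omega

lemma keyReal (a b m : ℕ) (hm : 1 ≤ m) :
    ((2:ℝ) ^ a + 2 ^ b) / 2 < 2 ^ m ↔
      (((2:ℝ) ^ a < 2 ^ m ∧ (2:ℝ) ^ b < 2 ^ m) ∨
       ((2:ℝ) ^ a = 2 ^ m ∧ (2:ℝ) ^ b < 2 ^ m) ∨
       ((2:ℝ) ^ a < 2 ^ m ∧ (2:ℝ) ^ b = 2 ^ m)) := by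
  have hlt : ∀ i j : ℕ, (2:ℝ) ^ i < 2 ^ j ↔ i < j := fun i j =>
    pow_lt_pow_iff_right₀ (by norm_num)
  have heq : ∀ i j : ℕ, (2:ℝ) ^ i = 2 ^ j ↔ i = j := fun i j =>
    ⟨fun h => pow_right_injective₀ (by norm_num) (by norm_num) h, fun h => by rw [h]⟩
  have h1 : ((2:ℝ) ^ a + 2 ^ b) / 2 < 2 ^ m ↔ (2:ℝ) ^ a + 2 ^ b < 2 ^ (m + 1) := by
    rw [div_lt_iff₀ (by norm_num : (0:ℝ) < 2), pow_succ]
  have h2 : ((2:ℝ) ^ a + 2 ^ b < 2 ^ (m + 1)) ↔ (2 ^ a + 2 ^ b < 2 ^ (m + 1)) := by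
    constructor
    · intro h; exact_mod_cast h
    · intro h; exact_mod_cast h
  rw [h1, h2, keyNat a b m hm]
  simp only [hlt, heq]

lemma half_pow_add (n : ℕ) :
    ((2:ℝ≥0∞) ^ (n + 1))⁻¹ + ((2:ℝ≥0∞) ^ (n + 1))⁻¹ = ((2:ℝ≥0∞) ^ n)⁻¹ := by
  simp only [ENNReal.inv_pow]
  rw [pow_succ, ← mul_add, ENNReal.inv_two_add_inv_two, mul_one]

lemma geom_aux (n : ℕ) :
    (∑ k ∈ Finset.range n, ((2:ℝ≥0∞) ^ (k + 1))⁻¹) + ((2:ℝ≥0∞) ^ n)⁻¹ = 1 := by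
  induction n with
  | zero => simp
  | succ n ih =>
    rw [Finset.sum_range_succ, add_assoc, half_pow_add, ih]

lemma sp_null (P : Measure Ω) [IsProbabilityMeasure P] {X : Ω → ℝ}
    (h : IsStPetersburg P X) : P {ω | ∀ k : ℕ, X ω ≠ 2 ^ (k + 1)} = 0 := by
  obtain ⟨hX, hP⟩ := h
  set S : ℕ → Set Ω := fun k => X ⁻¹' {(2:ℝ) ^ (k + 1)} with hS
  have hmeas : ∀ k, MeasurableSet (S k) := fun k => hX (measurableSet_singleton _)
  have hdisj : Pairwise (Function.onFun Disjoint S) := by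
    intro i j hij
    refine Set.disjoint_left.mpr fun ω hi hj => ?_
    have h2 : (2:ℝ) ^ (i + 1) = 2 ^ (j + 1) := by
      have hi' : X ω = 2 ^ (i + 1) := hi
      have hj' : X ω = 2 ^ (j + 1) := hj
      rw [← hi', hj']
    exact hij (Nat.succ_injective
      (pow_right_injective₀ (by norm_num : (0:ℝ) < 2) (by norm_num) h2))
  have hU : P (⋃ k, S k) = 1 := by
    rw [measure_iUnion hdisj hmeas]
    have hv : ∀ k, P (S k) = ((2:ℝ≥0∞) ^ (k + 1))⁻¹ := fun k => hP (k + 1) (by omega)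
    calc ∑' k, P (S k) = ∑' k : ℕ, ((2:ℝ≥0∞)⁻¹) ^ (k + 1) := by
          simp only [hv, ENNReal.inv_pow]
      _ = ∑' k : ℕ, ((2:ℝ≥0∞)⁻¹) ^ k * 2⁻¹ := by simp only [pow_succ]
      _ = (∑' k : ℕ, ((2:ℝ≥0∞)⁻¹) ^ k) * 2⁻¹ := ENNReal.tsum_mul_right
      _ = (1 - 2⁻¹)⁻¹ * 2⁻¹ := by rw [ENNReal.tsum_geometric]
      _ = 1 := by
          rw [ENNReal.one_sub_inv_two, inv_inv]
          exact ENNReal.mul_inv_cancel (by norm_num) (by norm_num)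
  have hset : {ω | ∀ k : ℕ, X ω ≠ 2 ^ (k + 1)} = (⋃ k, S k)ᶜ := by
    ext ω
    simp [hS, Set.mem_iUnion]
  rw [hset, measure_compl (MeasurableSet.iUnion hmeas) (measure_ne_top _ _), hU,
    measure_univ, tsub_self]

lemma sp_lt (P : Measure Ω) [IsProbabilityMeasure P] {X : Ω → ℝ}
    (h : IsStPetersburg P X) (m : ℕ) (hm : 1 ≤ m) :
    P {ω | X ω < 2 ^ m} = 1 - ((2:ℝ≥0∞) ^ (m - 1))⁻¹ := by
  obtain ⟨hX, hP⟩ := h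
  set S : ℕ → Set Ω := fun k => X ⁻¹' {(2:ℝ) ^ (k + 1)} with hS
  have hmeas : ∀ k, MeasurableSet (S k) := fun k => hX (measurableSet_singleton _)
  set T : Set Ω := {ω | X ω < 2 ^ m} with hT
  have hTm : MeasurableSet T := hX measurableSet_Iio
  have hnull : P {ω | ∀ k : ℕ, X ω ≠ 2 ^ (k + 1)} = 0 := sp_null P ⟨hX, hP⟩
  have hcompl : P (⋃ k, S k)ᶜ = 0 := by
    have hset : {ω | ∀ k : ℕ, X ω ≠ 2 ^ (k + 1)} = (⋃ k, S k)ᶜ := by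
      ext ω; simp [hS, Set.mem_iUnion]
    rw [← hset]; exact hnull
  have h0 : P T = P (T ∩ ⋃ k, S k) := (measure_inter_conull hcompl).symm
  have hdisj : Pairwise (Function.onFun Disjoint (fun k => T ∩ S k)) := by
    intro i j hij
    refine Set.disjoint_left.mpr fun ω hi hj => ?_
    have hi' : X ω = 2 ^ (i + 1) := hi.2
    have hj' : X ω = 2 ^ (j + 1) := hj.2
    have h2 : (2:ℝ) ^ (i + 1) = 2 ^ (j + 1) := by rw [← hi', hj']
    exact hij (Nat.succ_injective
      (pow_right_injective₀ (by norm_num : (0:ℝ) < 2) (by norm_num) h2))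
  have hval : ∀ k, P (T ∩ S k) =
      if k + 1 < m then ((2:ℝ≥0∞) ^ (k + 1))⁻¹ else 0 := by
    intro k
    by_cases hk : k + 1 < m
    · rw [if_pos hk]
      have hsub : S k ⊆ T := by
        intro ω hw
        have hw' : X ω = 2 ^ (k + 1) := hw
        have : (2:ℝ) ^ (k + 1) < 2 ^ m := (pow_lt_pow_iff_right₀ (by norm_num)).mpr hk
        simpa [hT, hw'] using this
      rw [Set.inter_eq_self_of_subset_right hsub]
      exact hP (k + 1) (by omega)
    · rw [if_neg hk]
      have : T ∩ S k = ∅ := by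
        ext ω
        simp only [Set.mem_inter_iff, Set.mem_empty_iff_false, iff_false, not_and]
        intro hwT hwS
        have hw' : X ω = 2 ^ (k + 1) := hwS
        have hlt : (2:ℝ) ^ (k + 1) < 2 ^ m := by
          have : X ω < 2 ^ m := hwT
          rwa [hw'] at this
        exact hk ((pow_lt_pow_iff_right₀ (by norm_num : (1:ℝ) < 2)).mp hlt)
      rw [this, measure_empty]
  have hsum : P T = ∑ k ∈ Finset.range (m - 1), ((2:ℝ≥0∞) ^ (k + 1))⁻¹ := by
    rw [h0, Set.inter_iUnion, measure_iUnion hdisj (fun k => hTm.inter (hmeas k))]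
    simp only [hval]
    rw [tsum_eq_sum (s := Finset.range (m - 1))
      (fun k hk => if_neg (by simp at hk; omega))]
    exact Finset.sum_congr rfl fun k hk => if_pos (by simp at hk; omega)
  rw [hsum]
  exact ENNReal.eq_sub_of_add_eq (by simp) (geom_aux (m - 1))

lemma rhs_eq (m : ℕ) (hm : 1 ≤ m) :
    ENNReal.ofReal (1 - (2:ℝ) ^ ((1:ℝ) - m)) = 1 - ((2:ℝ≥0∞) ^ (m - 1))⁻¹ := by
  obtain ⟨n, rfl⟩ : ∃ n, m = n + 1 := ⟨m - 1, by omega⟩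
  have h1 : ((1:ℝ) - ((n + 1 : ℕ) : ℝ)) = -(n : ℝ) := by push_cast; ring
  rw [h1, Real.rpow_neg (by norm_num), Real.rpow_natCast,
    ENNReal.ofReal_sub _ (by positivity), ENNReal.ofReal_one]
  congr 1
  rw [ENNReal.ofReal_inv_of_pos (by positivity), ENNReal.ofReal_pow (by norm_num)]
  norm_num

theorem stmt_9 (P : Measure Ω) [IsProbabilityMeasure P]
    (X₁ X₂ : Ω → ℝ) (h₁ : IsStPetersburg P X₁) (h₂ : IsStPetersburg P X₂)
    (hind : IndepFun X₁ X₂ P) :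
    ∀ m : ℕ, 1 ≤ m →
      P {ω | (X₁ ω + X₂ ω) / 2 < 2 ^ m} = P {ω | X₁ ω < 2 ^ m} ∧
      P {ω | X₁ ω < 2 ^ m} = ENNReal.ofReal (1 - (2 : ℝ) ^ ((1 : ℝ) - m)) := by
  intro m hm
  obtain ⟨hX₁, hP₁⟩ := h₁
  obtain ⟨hX₂, hP₂⟩ := h₂
  have hlt₁ := sp_lt P ⟨hX₁, hP₁⟩ m hm
  have hlt₂ := sp_lt P ⟨hX₂, hP₂⟩ m hm
  have hq₁ : P {ω | X₁ ω = 2 ^ m} = ((2:ℝ≥0∞) ^ m)⁻¹ := hP₁ m hm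
  have hq₂ : P {ω | X₂ ω = 2 ^ m} = ((2:ℝ≥0∞) ^ m)⁻¹ := hP₂ m hm
  set A₁ : Set Ω := X₁ ⁻¹' Set.Iio ((2:ℝ) ^ m) with hA₁
  set A₂ : Set Ω := X₂ ⁻¹' Set.Iio ((2:ℝ) ^ m) with hA₂
  set B₁ : Set Ω := X₁ ⁻¹' {(2:ℝ) ^ m} with hB₁
  set B₂ : Set Ω := X₂ ⁻¹' {(2:ℝ) ^ m} with hB₂
  have hA₁eq : {ω | X₁ ω < 2 ^ m} = A₁ := rfl
  have hA₂eq : {ω | X₂ ω < 2 ^ m} = A₂ := rfl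
  set F : Set Ω := (A₁ ∩ A₂) ∪ ((B₁ ∩ A₂) ∪ (A₁ ∩ B₂)) with hF
  -- a.e. the variables are powers of two
  have hae₁ : ∀ᵐ ω ∂P, ∃ k : ℕ, X₁ ω = 2 ^ (k + 1) := by
    rw [ae_iff]
    have := sp_null P ⟨hX₁, hP₁⟩
    simpa only [not_exists] using this
  have hae₂ : ∀ᵐ ω ∂P, ∃ k : ℕ, X₂ ω = 2 ^ (k + 1) := by
    rw [ae_iff]
    have := sp_null P ⟨hX₂, hP₂⟩
    simpa only [not_exists] using this
  have hEF : {ω | (X₁ ω + X₂ ω) / 2 < 2 ^ m} =ᵐ[P] F := by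
    rw [Filter.eventuallyEq_set]
    filter_upwards [hae₁, hae₂] with ω h1 h2
    obtain ⟨a, ha⟩ := h1
    obtain ⟨b, hb⟩ := h2
    simp only [Set.mem_setOf_eq, hF, Set.mem_union, Set.mem_inter_iff, hA₁, hA₂, hB₁, hB₂,
      Set.mem_preimage, Set.mem_Iio, Set.mem_singleton_iff, ha, hb]
    exact keyReal (a + 1) (b + 1) m hm
  have hPE : P {ω | (X₁ ω + X₂ ω) / 2 < 2 ^ m} = P F := measure_congr hEF
  -- disjointness
  have hd1 : Disjoint (A₁ ∩ A₂) ((B₁ ∩ A₂) ∪ (A₁ ∩ B₂)) := by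
    rw [Set.disjoint_union_right]
    constructor
    · refine Set.disjoint_left.mpr fun ω hx hy => ?_
      exact absurd hy.1 (ne_of_lt hx.1)
    · refine Set.disjoint_left.mpr fun ω hx hy => ?_
      exact absurd hy.2 (ne_of_lt hx.2)
  have hd2 : Disjoint (B₁ ∩ A₂) (A₁ ∩ B₂) := by
    refine Set.disjoint_left.mpr fun ω hx hy => ?_
    exact absurd hx.1 (ne_of_lt hy.1)
  have hmA₁ : MeasurableSet A₁ := hX₁ measurableSet_Iio
  have hmA₂ : MeasurableSet A₂ := hX₂ measurableSet_Iio
  have hmB₁ : MeasurableSet B₁ := hX₁ (measurableSet_singleton _)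
  have hmB₂ : MeasurableSet B₂ := hX₂ (measurableSet_singleton _)
  -- independence computations
  have i1 : P (A₁ ∩ A₂) = P A₁ * P A₂ :=
    hind.measure_inter_preimage_eq_mul _ _ measurableSet_Iio measurableSet_Iio
  have i2 : P (B₁ ∩ A₂) = P B₁ * P A₂ :=
    hind.measure_inter_preimage_eq_mul _ _ (measurableSet_singleton _) measurableSet_Iio
  have i3 : P (A₁ ∩ B₂) = P A₁ * P B₂ :=
    hind.measure_inter_preimage_eq_mul _ _ measurableSet_Iio (measurableSet_singleton _)
  have hPF : P F = P A₁ * P A₂ + (P B₁ * P A₂ + P A₁ * P B₂) := by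
    rw [hF, measure_union hd1 ((hmB₁.inter hmA₂).union (hmA₁.inter hmB₂)),
      measure_union hd2 (hmA₁.inter hmB₂), i1, i2, i3]
  set p : ℝ≥0∞ := 1 - ((2:ℝ≥0∞) ^ (m - 1))⁻¹ with hp
  set q : ℝ≥0∞ := ((2:ℝ≥0∞) ^ m)⁻¹ with hq
  have hPA₁ : P A₁ = p := by rw [← hA₁eq]; exact hlt₁
  have hPA₂ : P A₂ = p := by rw [← hA₂eq]; exact hlt₂
  have hPB₁ : P B₁ = q := hq₁
  have hPB₂ : P B₂ = q := hq₂
  have hqq : q + q = ((2:ℝ≥0∞) ^ (m - 1))⁻¹ := by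
    obtain ⟨n, rfl⟩ : ∃ n, m = n + 1 := ⟨m - 1, by omega⟩
    simpa [hq] using half_pow_add n
  have hple : ((2:ℝ≥0∞) ^ (m - 1))⁻¹ ≤ 1 := by
    rw [ENNReal.inv_le_one]
    exact one_le_pow_of_one_le' one_le_two _
  have hsum1 : p + (q + q) = 1 := by
    rw [hqq, hp]
    exact tsub_add_cancel_of_le hple
  have halg : p * p + (q * p + p * q) = p := by
    have : p * p + (q * p + p * q) = p * (p + (q + q)) := by ring
    rw [this, hsum1, mul_one]
  constructor
  · rw [hPE, hPF, hPA₁, hPA₂, hPB₁, hPB₂, halg, hA₁eq, hPA₁]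
  · rw [hA₁eq, hPA₁, rhs_eq m hm, hp]
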